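/- Let F be a field of characteristic zero, n, r ≥ 1 integers, V ⊆ Fⁿ an F-subspace of dimension m ≥ 1, and Σ ⊆ ℕʳ a set of cardinality m. Let Z ⊆ Vʳ be the set of x ∈ Vʳ such that the m vectors {χ_σ(x) : σ ∈ Σ} are linearly dependent over F in Fⁿ. Then, after identifying Vʳ with F^{mr} by choosing coordinates with respect to a basis of V, Z is contained in the zero locus of a nonzero polynomial in mr variables over F whose total degree is at most Σ_{σ∈Σ}(σ_1 + ⋯ + σ_r); in particular, Z is not all of Vʳ. -/

import Mathlib

open Module

/-- The multisymmetric monomial map `χ_σ`: the coordinatewise product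
`x_1^{σ_1} ⋯ x_r^{σ_r}` of the rows of `x`. -/
def chiMap {F : Type*} [CommRing F] {n r : ℕ} (σ : Fin r → ℕ) (x : Fin r → Fin n → F) :
    Fin n → F :=
  fun j => ∏ k, x k j ^ σ k

section AuxLemmas
open MvPolynomial

lemma pi_repr_single {F ι : Type*} [Field F] [Fintype ι] [DecidableEq ι] (w : ι → F) :
    w = ∑ i, w i • (Pi.single i 1 : ι → F) := by
  have h := Finset.univ_sum_single w
  rw [← h]
  congr 1
  ext i j
  simp [Pi.single_apply]

/-- If a finite family of functions is linearly independent, there are points making the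
evaluation matrix nonsingular. -/
lemma exists_points_det_ne_zero {F X ι : Type*} [Field F] [Fintype ι] [DecidableEq ι]
    {f : ι → X → F} (hf : LinearIndependent F f) :
    ∃ t : ι → X, (Matrix.of fun i j => f i (t j)).det ≠ 0 := by
  classical
  set v : X → (ι → F) := fun x i => f i x with hv
  have hspan : Submodule.span F (Set.range v) = ⊤ := by
    by_contra h
    obtain ⟨φ, hφ0, hφ⟩ := Submodule.exists_dual_map_eq_bot_of_lt_top
      (lt_top_iff_ne_top.mpr h) inferInstance
    set c : ι → F := fun i => φ (Pi.single i 1) with hc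
    have hcf : ∀ x : X, ∑ i, c i • f i x = 0 := by
      intro x
      have hvx : φ (v x) = 0 := by
        have : v x ∈ Submodule.span F (Set.range v) :=
          Submodule.subset_span ⟨x, rfl⟩
        have := Submodule.mem_map_of_mem (f := φ) this
        rw [hφ] at this
        exact (Submodule.mem_bot F).mp this
      rw [pi_repr_single (v x), map_sum] at hvx
      simpa [hc, smul_eq_mul, mul_comm] using hvx
    have hc0 : ∀ i, c i = 0 := by
      refine Fintype.linearIndependent_iff.mp hf c ?_
      ext x
      simpa [Finset.sum_apply] using hcf x
    apply hφ0
    refine LinearMap.ext fun w => ?_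
    rw [pi_repr_single w, map_sum]
    simp only [map_smul]
    simp [hc] at hc0
    simp [hc0]
  obtain ⟨s, hst, hsp, hsli⟩ := exists_linearIndependent F (Set.range v)
  rw [hspan] at hsp
  have hfin : s.Finite := hsli.setFinite
  haveI : Fintype s := hfin.fintype
  let B : Basis s F (ι → F) := Basis.mk hsli (by rw [Subtype.range_val]; rw [hsp])
  have hcard : Fintype.card s = Fintype.card ι := by
    have := Module.finrank_eq_card_basis B
    simpa [Module.finrank_fintype_fun_eq_card] using this.symm
  let e : ι ≃ s := (Fintype.equivOfCardEq hcard).symm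
  let B' : Basis ι F (ι → F) := B.reindex e.symm
  have hB' : ∀ j, ∃ x : X, v x = B' j := by
    intro j
    have hmem : (B' j : ι → F) ∈ s := by
      have h1 : B' j = B (e j) := by simp [B']
      rw [h1]
      simp only [B, Basis.mk_apply]
      exact (e j).2
    exact hst hmem
  choose t ht using hB'
  refine ⟨t, ?_⟩
  have hdet : IsUnit ((Pi.basisFun F ι).det B') :=
    (Basis.is_basis_iff_det (Pi.basisFun F ι)).mp ⟨B'.linearIndependent, B'.span_eq⟩
  rw [Basis.det_apply] at hdet
  have hdet' := hdet.ne_zero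
  convert hdet' using 2
  ext i j
  rw [Basis.toMatrix_apply]
  simp [← ht j, v]

/-- Distinct monomial functions on `F^r` are linearly independent over an infinite field. -/
lemma monomial_fns_linearIndependent {F : Type*} [Field F] [Infinite F] {r : ℕ}
    (S : Finset (Fin r → ℕ)) :
    LinearIndependent F (fun σ : {σ // σ ∈ S} => fun u : Fin r → F =>
      ∏ k, u k ^ (σ : Fin r → ℕ) k) := by
  classical
  rw [Fintype.linearIndependent_iff]
  intro c hc σ₀
  set d : {σ // σ ∈ S} → (Fin r →₀ ℕ) := fun σ => Finsupp.equivFunOnFinite.symm σ.1 with hd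
  have hdinj : Function.Injective d := by
    intro a b hab
    have := Finsupp.equivFunOnFinite.symm.injective hab
    exact Subtype.ext this
  set q : MvPolynomial (Fin r) F := ∑ σ : {σ // σ ∈ S}, monomial (d σ) (c σ) with hq
  have hq0 : q = 0 := by
    apply MvPolynomial.funext
    intro u
    have := congrFun hc u
    simp only [Finset.sum_apply, Pi.smul_apply, Pi.zero_apply, smul_eq_mul] at this
    rw [hq, map_sum, map_zero]
    rw [← this]
    refine Finset.sum_congr rfl fun σ _ => ?_
    rw [eval_monomial]
    rw [Finsupp.prod_pow]
    congr 1
  have := congrArg (coeff (d σ₀)) hq0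
  rw [hq, coeff_zero] at this
  rw [MvPolynomial.coeff_sum] at this
  rw [Finset.sum_eq_single σ₀] at this
  · simpa [coeff_monomial] using this
  · intro b _ hb
    rw [coeff_monomial, if_neg]
    exact fun h => hb (hdinj h)
  · simp

/-- Total degree bound for a determinant of a matrix of polynomials. -/
lemma totalDegree_det_le {F τ ι : Type*} [CommRing F] [Fintype ι] [DecidableEq ι]
    (M : Matrix ι ι (MvPolynomial τ F)) (d : ι → ℕ) (h : ∀ i j, (M i j).totalDegree ≤ d i) :
    M.det.totalDegree ≤ ∑ i, d i := by
  rw [Matrix.det_apply]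
  refine (totalDegree_finset_sum _ _).trans ?_
  refine Finset.sup_le fun π _ => ?_
  have hprod : (∏ i, M (π i) i).totalDegree ≤ ∑ i, d i := by
    refine (totalDegree_finset_prod _ _).trans ?_
    calc ∑ i, (M (π i) i).totalDegree ≤ ∑ i, d (π i) :=
          Finset.sum_le_sum fun i _ => h (π i) i
      _ = ∑ i, d i := Equiv.sum_comp π d
  rcases Int.units_eq_one_or (Equiv.Perm.sign π) with hs | hs <;> rw [hs]
  · simpa using hprod
  · rw [Units.neg_smul, one_smul, totalDegree_neg]
    exact hprod

end AuxLemmas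

open MvPolynomial in
/-- for a subspace `V ⊆ Fⁿ` and a set `Σ` of `m` exponent
vectors, the dependence locus lies in a hypersurface. -/
theorem dependence_locus_in_hypersurface
    (F : Type*) [Field F] [CharZero F] (n r m : ℕ) (hn : 1 ≤ n) (hr : 1 ≤ r) (hm : 1 ≤ m)
    (V : Submodule F (Fin n → F)) (hV : finrank F V = m)
    (S : Finset (Fin r → ℕ)) (hScard : S.card = m)
    (b : Basis (Fin m) F V) :
    (∃ p : MvPolynomial (Fin m × Fin r) F, p ≠ 0 ∧
      p.totalDegree ≤ ∑ σ ∈ S, ∑ k, σ k ∧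
      ∀ x : Fin r → V,
        ¬ LinearIndependent F (fun σ : {σ // σ ∈ S} =>
            chiMap (σ : Fin r → ℕ) (fun k => (x k : Fin n → F))) →
        MvPolynomial.eval (fun ik : Fin m × Fin r => b.repr (x ik.2) ik.1) p = 0) ∧
    {x : Fin r → V | ¬ LinearIndependent F (fun σ : {σ // σ ∈ S} =>
        chiMap (σ : Fin r → ℕ) (fun k => (x k : Fin n → F)))} ≠ Set.univ := by
  classical
  set ι := {σ // σ ∈ S} with hι
  -- Step 1: points where the monomial Vandermonde is nonsingular
  obtain ⟨u, hu⟩ := exists_points_det_ne_zero (monomial_fns_linearIndependent (F := F) S)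
  -- Step 2: coordinates where the basis matrix is nonsingular
  have hcard : Fintype.card ι = m := by simp [hι, hScard]
  let eqm : ι ≃ Fin m := (Fintype.equivFinOfCardEq hcard)
  let bb : ι → (Fin n → F) := fun a => (b (eqm a) : Fin n → F)
  have hbb : LinearIndependent F bb := by
    have h1 : LinearIndependent F (fun i : Fin m => (b i : Fin n → F)) :=
      b.linearIndependent.map' V.subtype V.ker_subtype
    exact h1.comp eqm eqm.injective
  obtain ⟨e, he⟩ := exists_points_det_ne_zero hbb
  -- the generic polynomial matrix
  let L : Fin r → ι → MvPolynomial (Fin m × Fin r) F := fun k a =>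
    ∑ i : Fin m, X (i, k) * C ((b i : Fin n → F) (e a))
  let P : Matrix ι ι (MvPolynomial (Fin m × Fin r) F) :=
    Matrix.of fun σ a => ∏ k, (L k a) ^ (σ : Fin r → ℕ) k
  -- evaluation of the matrix at a point x
  have hLeval : ∀ (x : Fin r → V) (k : Fin r) (a : ι),
      eval (fun ik : Fin m × Fin r => b.repr (x ik.2) ik.1) (L k a)
        = ((x k : Fin n → F)) (e a) := by
    intro x k a
    have hsum := b.sum_repr (x k)
    have hc := congrArg (fun v : V => (v : Fin n → F) (e a)) hsum
    simp only [Submodule.coe_sum, Finset.sum_apply, SetLike.val_smul, Pi.smul_apply,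
      smul_eq_mul] at hc
    simp only [L, map_sum, map_mul, eval_X, eval_C]
    exact hc
  have hPeval : ∀ x : Fin r → V,
      eval (fun ik : Fin m × Fin r => b.repr (x ik.2) ik.1) P.det
        = (Matrix.of fun (σ : ι) (a : ι) =>
            chiMap (σ : Fin r → ℕ) (fun k => (x k : Fin n → F)) (e a)).det := by
    intro x
    rw [RingHom.map_det]
    congr 1
    ext σ a
    simp only [RingHom.mapMatrix_apply, Matrix.map_apply, Matrix.of_apply, P, map_prod,
      map_pow, hLeval x, chiMap]
  -- vanishing on the dependence locus
  have hvan : ∀ x : Fin r → V,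
      ¬ LinearIndependent F (fun σ : ι =>
          chiMap (σ : Fin r → ℕ) (fun k => (x k : Fin n → F))) →
      eval (fun ik : Fin m × Fin r => b.repr (x ik.2) ik.1) P.det = 0 := by
    intro x hdep
    rw [hPeval x, ← Matrix.det_transpose, ← Matrix.exists_mulVec_eq_zero_iff]
    rw [Fintype.not_linearIndependent_iff] at hdep
    obtain ⟨c, hcsum, i, hci⟩ := hdep
    refine ⟨c, fun h => hci (congrFun h i), ?_⟩
    ext a
    have hpt := congrFun hcsum (e a)
    simp only [Finset.sum_apply, Pi.smul_apply, smul_eq_mul, Pi.zero_apply] at hpt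
    simp only [Matrix.mulVec, dotProduct, Matrix.transpose_apply, Matrix.of_apply,
      Pi.zero_apply]
    rw [← hpt]
    exact Finset.sum_congr rfl fun σ _ => mul_comm _ _
  -- the witness point x₀
  let T : V →ₗ[F] (ι → F) := LinearMap.pi fun a => (LinearMap.proj (e a)).comp V.subtype
  have hTsurj : Function.Surjective T := by
    rw [← LinearMap.range_eq_top]
    let w : ι → (ι → F) := fun a' a => bb a' (e a)
    have hdet2 : ((Pi.basisFun F ι).det w) ≠ 0 := by
      rw [Basis.det_apply]
      have hmat : (Pi.basisFun F ι).toMatrix w = (Matrix.of fun i j => bb i (e j)).transpose := by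
        ext i j
        rw [Basis.toMatrix_apply]
        simp [w, Matrix.transpose_apply]
      rw [hmat, Matrix.det_transpose]
      exact he
    have hspan := ((Basis.is_basis_iff_det (Pi.basisFun F ι)).mpr (isUnit_iff_ne_zero.mpr hdet2)).2
    rw [eq_top_iff, ← hspan]
    refine Submodule.span_le.mpr ?_
    rintro _ ⟨a', rfl⟩
    exact ⟨b (eqm a'), rfl⟩
  choose x₀ hx₀ using fun k => hTsurj (fun a => u a k)
  have hx₀' : ∀ (k : Fin r) (a : ι), ((x₀ k : Fin n → F)) (e a) = u a k :=
    fun k a => congrFun (hx₀ k) a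
  have hx₀det : eval (fun ik : Fin m × Fin r => b.repr (x₀ ik.2) ik.1) P.det ≠ 0 := by
    rw [hPeval x₀]
    have hmat : (Matrix.of fun (σ : ι) (a : ι) =>
        chiMap (σ : Fin r → ℕ) (fun k => (x₀ k : Fin n → F)) (e a))
        = Matrix.of fun (i : ι) (j : ι) => ∏ k, u j k ^ (i : Fin r → ℕ) k := by
      ext σ a
      simp [chiMap, hx₀']
    rw [hmat]
    exact hu
  refine ⟨⟨P.det, ?_, ?_, hvan⟩, ?_⟩
  · intro h
    rw [h] at hx₀det
    simp at hx₀det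
  · have hbound := totalDegree_det_le P (fun σ : ι => ∑ k, (σ : Fin r → ℕ) k) ?_
    · refine hbound.trans_eq ?_
      exact Finset.sum_coe_sort S fun σ => ∑ k, σ k
    · intro σ a
      simp only [P, Matrix.of_apply]
      refine (MvPolynomial.totalDegree_finset_prod _ _).trans ?_
      refine Finset.sum_le_sum fun k _ => ?_
      refine (MvPolynomial.totalDegree_pow _ _).trans ?_
      have hL : (L k a).totalDegree ≤ 1 := by
        refine (MvPolynomial.totalDegree_finset_sum _ _).trans ?_
        refine Finset.sup_le fun i _ => ?_
        refine (MvPolynomial.totalDegree_mul _ _).trans ?_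
        simp [MvPolynomial.totalDegree_X, MvPolynomial.totalDegree_C]
      calc (σ : Fin r → ℕ) k * (L k a).totalDegree
          ≤ (σ : Fin r → ℕ) k * 1 := Nat.mul_le_mul_left _ hL
        _ = (σ : Fin r → ℕ) k := Nat.mul_one _
  · intro hZ
    have hmem : x₀ ∈ {x : Fin r → V | ¬ LinearIndependent F (fun σ : {σ // σ ∈ S} =>
        chiMap (σ : Fin r → ℕ) (fun k => (x k : Fin n → F)))} := hZ ▸ Set.mem_univ x₀
    exact hx₀det (hvan x₀ hmem)
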